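/- Each Farey sequence F_n is strictly increasing (in particular every rational appears at most once in any F_n), and the union over all n of the sets of terms of F_n equals ℚ ∩ [0,1]. -/

import Mathlib

open scoped MatrixGroups OnePoint
open Matrix MeasureTheory Filter Topology

noncomputable section

namespace Farey

/-- Möbius action of a real 2×2 matrix on `ℝ ∪ {∞}`. -/
def mobAux (M : Matrix (Fin 2) (Fin 2) ℝ) : OnePoint ℝ → OnePoint ℝ :=
  OnePoint.rec (if M 1 0 = 0 then ∞ else ((M 0 0 / M 1 0 : ℝ) : OnePoint ℝ))
    (fun r => if M 1 0 * r + M 1 1 = 0 then ∞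
      else (((M 0 0 * r + M 0 1) / (M 1 0 * r + M 1 1) : ℝ) : OnePoint ℝ))

@[simp] lemma mobAux_infty (M : Matrix (Fin 2) (Fin 2) ℝ) :
    mobAux M ∞ = if M 1 0 = 0 then ∞ else ((M 0 0 / M 1 0 : ℝ) : OnePoint ℝ) := rfl

@[simp] lemma mobAux_coe (M : Matrix (Fin 2) (Fin 2) ℝ) (r : ℝ) :
    mobAux M (r : OnePoint ℝ) = if M 1 0 * r + M 1 1 = 0 then ∞
      else (((M 0 0 * r + M 0 1) / (M 1 0 * r + M 1 1) : ℝ) : OnePoint ℝ) := rfl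

lemma mobAux_neg (M : Matrix (Fin 2) (Fin 2) ℝ) : mobAux (-M) = mobAux M := by
  funext x
  induction x using OnePoint.rec with
  | infty => simp [Matrix.neg_apply, neg_eq_zero, neg_div_neg_eq]
  | coe r =>
      rw [mobAux_coe, mobAux_coe]
      have h1 : (-M) 1 0 * r + (-M) 1 1 = -(M 1 0 * r + M 1 1) := by
        simp [Matrix.neg_apply]; ring
      have h0 : (-M) 0 0 * r + (-M) 0 1 = -(M 0 0 * r + M 0 1) := by
        simp [Matrix.neg_apply]; ring
      rw [h1, h0]
      simp only [neg_eq_zero, neg_div_neg_eq]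

end Farey

namespace Farey

/-- Möbius action of an integral 2×2 special linear matrix on `ℝ ∪ {∞}`. -/
def mobSL (g : SL(2, ℤ)) : OnePoint ℝ → OnePoint ℝ :=
  mobAux ((g : Matrix (Fin 2) (Fin 2) ℤ).map (Int.cast : ℤ → ℝ))

lemma mobSL_mul_center (g z : SL(2, ℤ)) (hz : z ∈ Subgroup.center SL(2, ℤ)) :
    mobSL (g * z) = mobSL g := by
  obtain ⟨r, hr, hscalar⟩ := Matrix.SpecialLinearGroup.mem_center_iff.mp hz
  have hr' : r = 1 ∨ r = -1 := by
    have : IsUnit r := IsUnit.of_mul_eq_one (r ^ 1) (by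
      simpa [pow_succ, Fintype.card_fin] using hr)
    exact Int.isUnit_iff.mp this
  rcases hr' with h1 | h1
  · have : z = 1 := by
      ext i j
      have := congrFun (congrFun hscalar i) j
      simp [h1] at this
      simp [← this]
    simp [this]
  · have hzmat : (z : Matrix (Fin 2) (Fin 2) ℤ) = -1 := by
      ext i j
      have := congrFun (congrFun hscalar i) j
      simp [h1] at this
      simp [← this]
    unfold mobSL
    have : ((g * z : SL(2,ℤ)) : Matrix (Fin 2) (Fin 2) ℤ) = -(g : Matrix (Fin 2) (Fin 2) ℤ) := by
      rw [Matrix.SpecialLinearGroup.coe_mul, hzmat]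
      simp
    rw [this]
    have hmap : ((-(g : Matrix (Fin 2) (Fin 2) ℤ)).map (Int.cast : ℤ → ℝ))
        = -(((g : Matrix (Fin 2) (Fin 2) ℤ)).map (Int.cast : ℤ → ℝ)) := by
      ext i j
      simp
    rw [hmap, mobAux_neg]

/-- Möbius action of an element of `PSL(2,ℤ)` on `ℝ ∪ {∞}`. -/
def mob (x : PSL(2, ℤ)) : OnePoint ℝ → OnePoint ℝ :=
  Quotient.liftOn' x mobSL (by
    intro g h hgh
    have hmem : g⁻¹ * h ∈ Subgroup.center SL(2, ℤ) := QuotientGroup.leftRel_apply.mp hgh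
    have : h = g * (g⁻¹ * h) := by group
    rw [this, mobSL_mul_center g _ hmem])

end Farey

namespace Farey

/-- The matrix `A = [[1,-2],[1,-1]]` as an element of `SL(2,ℤ)`. -/
def A : SL(2, ℤ) := ⟨!![1, -2; 1, -1], by norm_num [Matrix.det_fin_two_of]⟩

/-- The matrix `B = [[0,-1],[1,0]]` as an element of `SL(2,ℤ)`. -/
def B : SL(2, ℤ) := ⟨!![0, -1; 1, 0], by norm_num [Matrix.det_fin_two_of]⟩

/-- The matrix `C = [[1,-1],[2,-1]]` as an element of `SL(2,ℤ)`. -/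
def C : SL(2, ℤ) := ⟨!![1, -1; 2, -1], by norm_num [Matrix.det_fin_two_of]⟩

/-- The element `a ∈ PSL(2,ℤ)`. -/
def a : PSL(2, ℤ) := QuotientGroup.mk A

/-- The element `b ∈ PSL(2,ℤ)`. -/
def b : PSL(2, ℤ) := QuotientGroup.mk B

/-- The element `c ∈ PSL(2,ℤ)`. -/
def c : PSL(2, ℤ) := QuotientGroup.mk C

/-- The Farey group: the subgroup of `PSL(2,ℤ)` generated by `a`, `b`, `c`. -/
def fareyGroup : Subgroup PSL(2, ℤ) := Subgroup.closure {a, b, c}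

/-- The word length of an element of `PSL(2,ℤ)` with respect to the generators
`a`, `b`, `c` of the Farey group. -/
def wordLength (x : PSL(2, ℤ)) : ℕ :=
  sInf {n | ∃ l : List PSL(2, ℤ), l.length = n ∧ (∀ s ∈ l, s = a ∨ s = b ∨ s = c) ∧ l.prod = x}

/-- The sphere of radius `n` in the Farey group for the word metric w.r.t. `{a,b,c}`. -/
def sphere (n : ℕ) : Set PSL(2, ℤ) := {x | x ∈ fareyGroup ∧ wordLength x = n}

end Farey

namespace Farey

/-- The mediant of two rationals, `p₁/q₁ ⊕ p₂/q₂ = (p₁+p₂)/(q₁+q₂)` (in lowest terms). -/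
def mediant (p q : ℚ) : ℚ := ((p.num + q.num : ℤ) : ℚ) / (((p.den : ℤ) + (q.den : ℤ) : ℤ) : ℚ)

/-- Insert the mediant between every two consecutive entries of a list of rationals. -/
def insertMediants : List ℚ → List ℚ
  | p :: q :: rest => p :: mediant p q :: insertMediants (q :: rest)
  | l => l

/-- The Farey sequences: `F_0 = (0,1)`, and `F_{n+1}` is obtained from `F_n` by inserting
mediants between consecutive terms. -/
def fareySeq : ℕ → List ℚ
  | 0 => [0, 1]
  | n + 1 => insertMediants (fareySeq n)

/-- `p, q` are consecutive terms of the Farey sequence `F_n`. -/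
def IsFareyPairIn (n : ℕ) (p q : ℚ) : Prop :=
  ∃ i : ℕ, (fareySeq n)[i]? = some p ∧ (fareySeq n)[i + 1]? = some q

/-- `p, q` form a Farey pair: they are consecutive terms of some Farey sequence. -/
def IsFareyPair (p q : ℚ) : Prop := ∃ n : ℕ, IsFareyPairIn n p q

/-- The `k`-th summand (`k = 0, 1, 2, …`) in the series defining Minkowski's question mark
function: `(−1)^k 2^{−(a₁+⋯+a_{k+1})}` when the continued fraction expansion
`x = [a₀; a₁, a₂, …]` has at least `k+1` partial denominators and `0` otherwise. -/
def qmTerm (x : ℝ) (k : ℕ) : ℝ :=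
  match (List.range (k + 1)).mapM (fun i => (GenContFract.of x).partDens.get? i) with
  | none => 0
  | some l => (-1 : ℝ) ^ k * (2 : ℝ) ^ (-(l.sum))

/-- Minkowski's question mark function on `[0,1]`:
`?(x) = 2 ∑_{k≥1} (−1)^{k+1} 2^{−(a₁+⋯+a_k)}` for `x = [0; a₁, a₂, …]`, `?(1) = 1`. -/
def questionMark (x : ℝ) : ℝ := if x = 1 then 1 else 2 * ∑' k : ℕ, qmTerm x k

/-- The extended Minkowski function `M̄(q) = (1/3)(∑_{k=−∞}^{m−1} 2^{−|k|} + ?(q−m)·2^{−|m|})`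
for `q ∈ [m, m+1]`. -/
def extM (q : ℝ) : ℝ :=
  (1 / 3) * ((∑' j : ℕ, (2 : ℝ) ^ (-|⌊q⌋ - 1 - (j : ℤ)|)) +
    questionMark (q - ⌊q⌋) * (2 : ℝ) ^ (-|⌊q⌋|))

instance : MeasurableSpace (OnePoint ℝ) := borel _
instance : BorelSpace (OnePoint ℝ) := ⟨rfl⟩

/-- `μ` is the extended Minkowski measure: the Borel probability measure on `ℝ ∪ {∞}` giving
no mass to `{∞}` whose cumulative distribution function is the extended Minkowski function. -/
def IsExtMinkowskiMeasure (μ : Measure (OnePoint ℝ)) : Prop :=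
  IsProbabilityMeasure μ ∧ μ {∞} = 0 ∧
    ∀ u v : ℝ, u ≤ v →
      μ ((fun r : ℝ => (r : OnePoint ℝ)) '' Set.Ico u v) = ENNReal.ofReal (extM v - extM u)

end Farey

open Farey

section FareyProofAux

open Farey

private lemma rat_lt_iff' (p q : ℚ) : p < q ↔ p.num * q.den < q.num * p.den := by
  have hp : (0:ℚ) < (p.den:ℚ) := by exact_mod_cast p.den_pos
  have hq : (0:ℚ) < (q.den:ℚ) := by exact_mod_cast q.den_pos
  constructor
  · intro h
    have h' : (p.num:ℚ)/(p.den:ℚ) < (q.num:ℚ)/(q.den:ℚ) := by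
      rw [Rat.num_div_den, Rat.num_div_den]; exact h
    rw [div_lt_div_iff₀ hp hq] at h'
    exact_mod_cast h'
  · intro h
    have h' : (p.num:ℚ)/(p.den:ℚ) < (q.num:ℚ)/(q.den:ℚ) := by
      rw [div_lt_div_iff₀ hp hq]; exact_mod_cast h
    rwa [Rat.num_div_den, Rat.num_div_den] at h'

private lemma rat_le_iff' (p q : ℚ) : p ≤ q ↔ p.num * q.den ≤ q.num * p.den := by
  rw [← not_lt, ← not_lt, not_iff_not, rat_lt_iff']

private lemma mediant_num_den {p q : ℚ} (h : q.num * (p.den:ℤ) - p.num * (q.den:ℤ) = 1) :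
    (mediant p q).num = p.num + q.num ∧ ((mediant p q).den : ℤ) = (p.den:ℤ) + (q.den:ℤ) := by
  have hb : (0:ℤ) < (p.den:ℤ) + (q.den:ℤ) := by positivity
  have hcop : Nat.Coprime (p.num + q.num).natAbs ((p.den:ℤ) + (q.den:ℤ)).natAbs := by
    have hco : IsCoprime (p.num + q.num) ((p.den:ℤ) + (q.den:ℤ)) :=
      ⟨-(q.den:ℤ), q.num, by linarith [h]⟩
    rwa [Int.isCoprime_iff_gcd_eq_one, Int.gcd] at hco
  exact ⟨Rat.num_div_eq_of_coprime hb hcop, Rat.den_div_eq_of_coprime hb hcop⟩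

private lemma lt_mediant {p q : ℚ} (h : p < q) : p < mediant p q := by
  have hp : (0:ℚ) < (p.den:ℚ) := by exact_mod_cast p.den_pos
  have hb : (0:ℚ) < ((((p.den : ℤ) + (q.den : ℤ) : ℤ)) : ℚ) := by
    have : (0:ℤ) < (p.den:ℤ) + (q.den:ℤ) := by positivity
    exact_mod_cast this
  have hlt : (p.num:ℚ) * (q.den:ℚ) < (q.num:ℚ) * (p.den:ℚ) := by
    exact_mod_cast (rat_lt_iff' p q).mp h
  have key : (p.num:ℚ)/(p.den:ℚ) <
      (((p.num + q.num : ℤ)) : ℚ) / ((((p.den : ℤ) + (q.den : ℤ) : ℤ)) : ℚ) := by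
    rw [div_lt_div_iff₀ hp hb]
    push_cast
    nlinarith [hlt]
  rw [Rat.num_div_den] at key
  exact key

private lemma mediant_lt {p q : ℚ} (h : p < q) : mediant p q < q := by
  have hq : (0:ℚ) < (q.den:ℚ) := by exact_mod_cast q.den_pos
  have hb : (0:ℚ) < ((((p.den : ℤ) + (q.den : ℤ) : ℤ)) : ℚ) := by
    have : (0:ℤ) < (p.den:ℤ) + (q.den:ℤ) := by positivity
    exact_mod_cast this
  have hlt : (p.num:ℚ) * (q.den:ℚ) < (q.num:ℚ) * (p.den:ℚ) := by
    exact_mod_cast (rat_lt_iff' p q).mp h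
  have key : (((p.num + q.num : ℤ)) : ℚ) / ((((p.den : ℤ) + (q.den : ℤ) : ℤ)) : ℚ) <
      (q.num:ℚ)/(q.den:ℚ) := by
    rw [div_lt_div_iff₀ hb hq]
    push_cast
    nlinarith [hlt]
  rw [Rat.num_div_den] at key
  exact key

private lemma mediant_mem01 {p q : ℚ} (hp0 : 0 ≤ p) (hp1 : p ≤ 1) (hq0 : 0 ≤ q) (hq1 : q ≤ 1) :
    0 ≤ mediant p q ∧ mediant p q ≤ 1 := by
  have hb : (0:ℚ) < ((((p.den : ℤ) + (q.den : ℤ) : ℤ)) : ℚ) := by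
    have : (0:ℤ) < (p.den:ℤ) + (q.den:ℤ) := by positivity
    exact_mod_cast this
  have hpn : 0 ≤ p.num := Rat.num_nonneg.mpr hp0
  have hqn : 0 ≤ q.num := Rat.num_nonneg.mpr hq0
  have hpd : p.num ≤ (p.den:ℤ) := by
    have := (rat_le_iff' p 1).mp hp1; simpa using this
  have hqd : q.num ≤ (q.den:ℤ) := by
    have := (rat_le_iff' q 1).mp hq1; simpa using this
  constructor
  · show (0:ℚ) ≤ (((p.num + q.num : ℤ)) : ℚ) / ((((p.den : ℤ) + (q.den : ℤ) : ℤ)) : ℚ)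
    apply div_nonneg _ hb.le
    exact_mod_cast add_nonneg hpn hqn
  · show (((p.num + q.num : ℤ)) : ℚ) / ((((p.den : ℤ) + (q.den : ℤ) : ℤ)) : ℚ) ≤ 1
    rw [div_le_one hb]
    exact_mod_cast add_le_add hpd hqd

/-- `p` and `q` are adjacent entries of the list `l`. -/
private def Adj (l : List ℚ) (p q : ℚ) : Prop := ∃ s t : List ℚ, l = s ++ p :: q :: t

private lemma adj_cons {x p q : ℚ} {l : List ℚ} :
    Adj (x :: l) p q ↔ (x = p ∧ ∃ t, l = q :: t) ∨ Adj l p q := by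
  constructor
  · rintro ⟨s, t, hst⟩
    cases s with
    | nil =>
        simp only [List.nil_append, List.cons.injEq] at hst
        exact Or.inl ⟨hst.1, t, hst.2⟩
    | cons y s' =>
        simp only [List.cons_append, List.cons.injEq] at hst
        exact Or.inr ⟨s', t, hst.2⟩
  · rintro (⟨rfl, t, rfl⟩ | ⟨s, t, rfl⟩)
    · exact ⟨[], t, rfl⟩
    · exact ⟨x :: s, t, rfl⟩

private lemma adj_mem {l : List ℚ} {p q : ℚ} (h : Adj l p q) : p ∈ l ∧ q ∈ l := by
  obtain ⟨s, t, rfl⟩ := h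
  simp

private lemma sublist_insertMediants : ∀ l : List ℚ, l.Sublist (insertMediants l)
  | [] => by simp [insertMediants]
  | [p] => by simp [insertMediants]
  | p :: q :: rest => by
      have ih := sublist_insertMediants (q :: rest)
      exact ((ih.cons (mediant p q)).cons₂ p)

private lemma chain'_insertMediants : ∀ l : List ℚ, l.Chain' (· < ·) →
    (insertMediants l).Chain' (· < ·)
  | [], _ => by simpa [insertMediants]
  | [p], _ => by simpa [insertMediants]
  | p :: q :: rest, h => by
      obtain ⟨hpq, hrest⟩ := List.isChain_cons_cons.mp h
      have ih := chain'_insertMediants (q :: rest) hrest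
      have hm1 := lt_mediant hpq
      have hm2 := mediant_lt hpq
      cases rest with
      | nil =>
          show List.Chain' (· < ·) [p, mediant p q, q]
          exact List.isChain_cons_cons.mpr ⟨hm1, List.isChain_cons_cons.mpr ⟨hm2, List.isChain_singleton q⟩⟩
      | cons r rest' =>
          show List.Chain' (· < ·)
            (p :: mediant p q :: q :: mediant q r :: insertMediants (r :: rest'))
          have ih' : List.Chain' (· < ·) (q :: mediant q r :: insertMediants (r :: rest')) := ih
          exact List.isChain_cons_cons.mpr ⟨hm1, List.isChain_cons_cons.mpr ⟨hm2, ih'⟩⟩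

private lemma mem_insertMediants : ∀ {l : List ℚ} {x : ℚ}, x ∈ insertMediants l →
    x ∈ l ∨ ∃ p q, Adj l p q ∧ x = mediant p q
  | [], x, h => by simp [insertMediants] at h
  | [p], x, h => by
      simp only [insertMediants] at h
      exact Or.inl h
  | p :: q :: rest, x, h => by
      have h' : x ∈ p :: mediant p q :: insertMediants (q :: rest) := h
      rw [List.mem_cons, List.mem_cons] at h'
      rcases h' with rfl | rfl | h'
      · exact Or.inl (List.mem_cons_self)
      · exact Or.inr ⟨p, q, ⟨[], rest, rfl⟩, rfl⟩
      · rcases mem_insertMediants h' with hm | ⟨p', q', hadj, rfl⟩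
        · exact Or.inl (List.mem_cons_of_mem _ hm)
        · exact Or.inr ⟨p', q', adj_cons.mpr (Or.inr hadj), rfl⟩

private lemma adj_insertMediants : ∀ {l : List ℚ} {u v : ℚ}, Adj (insertMediants l) u v →
    ∃ p q, Adj l p q ∧ ((u = p ∧ v = mediant p q) ∨ (u = mediant p q ∧ v = q))
  | [], u, v, h => by
      obtain ⟨s, t, hst⟩ := h
      simp [insertMediants] at hst
  | [p], u, v, h => by
      obtain ⟨s, t, hst⟩ := h
      have : ([p] : List ℚ) = s ++ u :: v :: t := hst
      rcases s with _ | ⟨y, s'⟩ <;> simp at this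
  | p :: q :: rest, u, v, h => by
      have h' : Adj (p :: mediant p q :: insertMediants (q :: rest)) u v := h
      rcases adj_cons.mp h' with ⟨rfl, t, ht⟩ | h''
      · have : v = mediant p q := by
          simpa using (congrArg (fun l => l.head?) ht).symm
        exact ⟨p, q, ⟨[], rest, rfl⟩, Or.inl ⟨rfl, this⟩⟩
      · rcases adj_cons.mp h'' with ⟨rfl, t, ht⟩ | h'''
        · have hv : v = q := by
            cases rest with
            | nil =>
                have : ([q] : List ℚ) = v :: t := ht
                simpa using (congrArg (fun l => l.head?) this).symm
            | cons r rest' =>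
                have : q :: mediant q r :: insertMediants (r :: rest') = v :: t := ht
                simpa using (congrArg (fun l => l.head?) this).symm
          exact ⟨p, q, ⟨[], rest, rfl⟩, Or.inr ⟨rfl, hv⟩⟩
        · obtain ⟨p', q', hadj, hcase⟩ := adj_insertMediants h'''
          exact ⟨p', q', adj_cons.mpr (Or.inr hadj), hcase⟩

private lemma adj_insertMediants_pair : ∀ (s t : List ℚ) (p q : ℚ),
    Adj (insertMediants (s ++ p :: q :: t)) p (mediant p q) ∧
    Adj (insertMediants (s ++ p :: q :: t)) (mediant p q) q
  | [], t, p, q => by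
      constructor
      · exact ⟨[], insertMediants (q :: t), rfl⟩
      · cases t with
        | nil => exact ⟨[p], [], rfl⟩
        | cons r t' => exact ⟨[p], mediant q r :: insertMediants (r :: t'), rfl⟩
  | y :: s', t, p, q => by
      have ih := adj_insertMediants_pair s' t p q
      have hexp : ∃ z rest, s' ++ p :: q :: t = z :: rest := by
        cases s' with
        | nil => exact ⟨p, q :: t, rfl⟩
        | cons z s'' => exact ⟨z, s'' ++ p :: q :: t, rfl⟩
      obtain ⟨z, rest, hz⟩ := hexp
      rw [hz] at ih
      rw [List.cons_append, hz]
      constructor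
      · exact adj_cons.mpr (Or.inr (adj_cons.mpr (Or.inr ih.1)))
      · exact adj_cons.mpr (Or.inr (adj_cons.mpr (Or.inr ih.2)))

private lemma adj_insertMediants_of_adj {l : List ℚ} {p q : ℚ} (h : Adj l p q) :
    Adj (insertMediants l) p (mediant p q) ∧ Adj (insertMediants l) (mediant p q) q := by
  obtain ⟨s, t, rfl⟩ := h
  exact adj_insertMediants_pair s t p q

private lemma uni_invariant : ∀ (n : ℕ) (p q : ℚ), Adj (fareySeq n) p q →
    q.num * (p.den:ℤ) - p.num * (q.den:ℤ) = 1
  | 0, p, q, h => by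
      obtain ⟨s, t, hst⟩ := h
      have h0 : ([0, 1] : List ℚ) = s ++ p :: q :: t := hst
      rcases s with _ | ⟨y, _ | ⟨z, s'⟩⟩ <;> simp [List.cons.injEq] at h0
      obtain ⟨h1, h2, -⟩ := h0
      subst h1; subst h2
      decide
  | n + 1, u, v, h => by
      obtain ⟨p, q, hadj, hcase⟩ := adj_insertMediants (l := fareySeq n) h
      have huni := uni_invariant n p q hadj
      obtain ⟨hnum, hden⟩ := mediant_num_den huni
      rcases hcase with ⟨rfl, rfl⟩ | ⟨rfl, rfl⟩
      · rw [hnum, hden]; linear_combination huni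
      · rw [hnum, hden]; linear_combination huni

private lemma den_ge {p q x : ℚ} (huni : q.num * (p.den:ℤ) - p.num * (q.den:ℤ) = 1)
    (h1 : p < x) (h2 : x < q) : (p.den:ℤ) + (q.den:ℤ) ≤ (x.den:ℤ) := by
  have a1 : 1 ≤ x.num * (p.den:ℤ) - p.num * (x.den:ℤ) := by
    have := (rat_lt_iff' p x).mp h1; omega
  have a2 : 1 ≤ q.num * (x.den:ℤ) - x.num * (q.den:ℤ) := by
    have := (rat_lt_iff' x q).mp h2; omega
  have hp : (0:ℤ) ≤ (p.den:ℤ) := by positivity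
  have hq : (0:ℤ) ≤ (q.den:ℤ) := by positivity
  have key : (x.den:ℤ) = (p.den:ℤ) * (q.num * (x.den:ℤ) - x.num * (q.den:ℤ))
      + (q.den:ℤ) * (x.num * (p.den:ℤ) - p.num * (x.den:ℤ)) := by
    linear_combination -(x.den:ℤ) * huni
  have t1 := mul_le_mul_of_nonneg_left a2 hp
  have t2 := mul_le_mul_of_nonneg_left a1 hq
  linarith [key, t1, t2]

private lemma mem_mono {n : ℕ} {x : ℚ} (h : x ∈ fareySeq n) : x ∈ fareySeq (n + 1) :=
  (sublist_insertMediants (fareySeq n)).subset h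

private lemma bracket (x : ℚ) (hx0 : 0 < x) (hx1 : x < 1) :
    ∀ n : ℕ, x ∈ fareySeq n ∨
      ∃ p q, Adj (fareySeq n) p q ∧ p < x ∧ x < q ∧ (n:ℤ) + 2 ≤ (p.den:ℤ) + (q.den:ℤ)
  | 0 => Or.inr ⟨0, 1, ⟨[], [], rfl⟩, hx0, hx1, by norm_num⟩
  | n + 1 => by
      rcases bracket x hx0 hx1 n with hmem | ⟨p, q, hadj, hp, hq, hden⟩
      · exact Or.inl (mem_mono hmem)
      · have huni := uni_invariant n p q hadj
        obtain ⟨hnum, hmden⟩ := mediant_num_den huni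
        obtain ⟨hL, hR⟩ := adj_insertMediants_of_adj hadj
        have hp1 : (1:ℤ) ≤ (p.den:ℤ) := by exact_mod_cast p.den_pos
        have hq1 : (1:ℤ) ≤ (q.den:ℤ) := by exact_mod_cast q.den_pos
        rcases lt_trichotomy x (mediant p q) with hlt | heq | hgt
        · refine Or.inr ⟨p, mediant p q, hL, hp, hlt, ?_⟩
          rw [hmden]; push_cast; linarith
        · exact Or.inl (heq ▸ (adj_mem hL).2)
        · refine Or.inr ⟨mediant p q, q, hR, hgt, hq, ?_⟩
          rw [hmden]; push_cast; linarith

end FareyProofAux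

theorem fareySeq_sorted_and_union' :
    (∀ n : ℕ, (fareySeq n).Pairwise (· < ·)) ∧
    (∀ n : ℕ, (fareySeq n).Nodup) ∧
    (∀ q : ℚ, (∃ n : ℕ, q ∈ fareySeq n) ↔ 0 ≤ q ∧ q ≤ 1) := by
  have hsorted : ∀ n : ℕ, (fareySeq n).Pairwise (· < ·) := by
    intro n
    induction n with
    | zero =>
        show List.Pairwise (· < ·) [0, 1]
        norm_num [List.pairwise_cons]
    | succ n ih =>
        show List.Pairwise (· < ·) (insertMediants (fareySeq n))
        exact List.isChain_iff_pairwise.mp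
          (chain'_insertMediants _ (List.isChain_iff_pairwise.mpr ih))
  have hmem01 : ∀ (n : ℕ) (x : ℚ), x ∈ fareySeq n → 0 ≤ x ∧ x ≤ 1 := by
    intro n
    induction n with
    | zero =>
        intro x hx
        have hx2 : x ∈ ([0, 1] : List ℚ) := hx
        have hx' : x = 0 ∨ x = 1 := by simpa using hx2
        rcases hx' with rfl | rfl <;> norm_num
    | succ n ih =>
        intro x hx
        rcases mem_insertMediants hx with hm | ⟨p, q, hadj, rfl⟩
        · exact ih x hm
        · obtain ⟨hpm, hqm⟩ := adj_mem hadj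
          obtain ⟨hp0, hp1⟩ := ih p hpm
          obtain ⟨hq0, hq1⟩ := ih q hqm
          exact mediant_mem01 hp0 hp1 hq0 hq1
  refine ⟨hsorted, fun n => (hsorted n).nodup, fun q => ⟨?_, ?_⟩⟩
  · rintro ⟨n, hn⟩
    exact hmem01 n q hn
  · rintro ⟨h0, h1⟩
    rcases eq_or_lt_of_le h0 with h0 | h0
    · exact ⟨0, by rw [← h0]; show (0:ℚ) ∈ [0, 1]; simp⟩
    rcases eq_or_lt_of_le h1 with h1 | h1
    · exact ⟨0, by rw [h1]; show (1:ℚ) ∈ [0, 1]; simp⟩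
    refine ⟨q.den, ?_⟩
    rcases bracket q h0 h1 q.den with hmem | ⟨p, r, hadj, hp, hr, hden⟩
    · exact hmem
    · exfalso
      have huni := uni_invariant q.den p r hadj
      have := den_ge huni hp hr
      omega


/-- **Lemma (Farey sequences).** Each Farey sequence `F_n` is strictly increasing (in
particular each rational appears at most once in any `F_n`), and the union over all `n` of
the sets of terms of the `F_n` equals `ℚ ∩ [0,1]`. -/
theorem fareySeq_sorted_and_union :
    (∀ n : ℕ, (fareySeq n).Pairwise (· < ·)) ∧
    (∀ n : ℕ, (fareySeq n).Nodup) ∧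
    (∀ q : ℚ, (∃ n : ℕ, q ∈ fareySeq n) ↔ 0 ≤ q ∧ q ≤ 1) :=
  fareySeq_sorted_and_union'
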